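/- (Proposition 4.7 combinatorial content) Let $G$ be a group with normalized 3-cocycle $\omega$, $H \le G$ a subgroup. On the free vector space with basis $\{A(h_1,g_1,s,h_2,g_2) : h_1,h_2 \in H,\ g_1,g_2,s \in G,\ h_1 g_1 s = s h_2 g_2\}$, define $A(h_2'',g_2,t,h_3,g_3)\cdot A(h_1,g_1,s,h_2',g_2) = \delta_{h_2'=h_2''}\,[\omega(s,t,h_3 g_3)\,\overline{\omega}(s,h_2' g_2,t)\,\omega(h_1 g_1,s,t)]\,A(h_1,g_1,st,h_3,g_3)$ (zero if the triples $(h_2',g_2)$, $(h_2'',g_2)$ or the $g$'s mismatch). Then this multiplication is associative. -/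

import Mathlib

/-- Basis elements `A(h₁,g₁,s,h₂,g₂)` of the affine annular algebra of a
Bisch–Haagerup subfactor: `h₁, h₂ ∈ H` and `h₁g₁s = s h₂g₂`. -/
structure BHBasis (G : Type*) [Group G] (H : Subgroup G) where
  h1 : G
  g1 : G
  s : G
  h2 : G
  g2 : G
  mh1 : h1 ∈ H
  mh2 : h2 ∈ H
  rel : h1 * g1 * s = s * (h2 * g2)

/-- Product of basis elements: `A(h₂'',g₂,t,h₃,g₃) ⬝ A(h₁,g₁,s,h₂',g₂) =
δ_{h₂'=h₂''} ω(s,t,h₃g₃) ω̄(s,h₂'g₂,t) ω(h₁g₁,s,t) A(h₁,g₁,st,h₃,g₃)`.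
Here `p` is the left factor and `q` the right factor. -/
noncomputable def bhMulBasis {G : Type*} [Group G] [DecidableEq G] {H : Subgroup G}
    (ω : G → G → G → Circle) (p q : BHBasis G H) : BHBasis G H →₀ ℂ :=
  if h : q.h2 = p.h1 ∧ q.g2 = p.g1 then
    Finsupp.single
      ({ h1 := q.h1, g1 := q.g1, s := q.s * p.s, h2 := p.h2, g2 := p.g2
         mh1 := q.mh1, mh2 := p.mh2
         rel := by
          obtain ⟨hh, hg⟩ := h
          have r1 := q.rel
          have r2 := p.rel
          rw [hh, hg] at r1
          calc q.h1 * q.g1 * (q.s * p.s) = (q.h1 * q.g1 * q.s) * p.s := by group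
            _ = (q.s * (p.h1 * p.g1)) * p.s := by rw [r1]
            _ = q.s * (p.h1 * p.g1 * p.s) := by group
            _ = q.s * (p.s * (p.h2 * p.g2)) := by rw [r2]
            _ = q.s * p.s * (p.h2 * p.g2) := by group } : BHBasis G H)
      ((ω q.s p.s (p.h2 * p.g2) * (ω q.s (q.h2 * q.g2) p.s)⁻¹ *
          ω (q.h1 * q.g1) q.s p.s : Circle) : ℂ)
  else 0

/-- The bilinear extension of the basis product (first argument is the left factor). -/
noncomputable def bhMul {G : Type*} [Group G] [DecidableEq G] {H : Subgroup G}
    (ω : G → G → G → Circle) (x y : BHBasis G H →₀ ℂ) : BHBasis G H →₀ ℂ :=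
  Finsupp.sum x fun p a => Finsupp.sum y fun q b => (a * b) • bhMulBasis ω p q

section Aux

variable {G : Type*} [Group G] [DecidableEq G] {H : Subgroup G} (ω : G → G → G → Circle)

lemma coeff_key'
    (hω : ∀ g1 g2 g3 g4 : G,
      ω g1 g2 g3 * ω g1 (g2 * g3) g4 * ω g2 g3 g4 =
        ω (g1 * g2) g3 g4 * ω g1 g2 (g3 * g4))
    (a b c x y z w : G) (e1 : y * a = a * x) (e2 : z * b = b * y) (e3 : w * c = c * z) :
    ((ω b a x * (ω b y a)⁻¹ * ω z b a : Circle) : ℂ) *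
      ((ω c (b*a) x * (ω c z (b*a))⁻¹ * ω w c (b*a) : Circle) : ℂ) =
    ((ω c b y * (ω c z b)⁻¹ * ω w c b : Circle) : ℂ) *
      ((ω (c*b) a x * (ω (c*b) y a)⁻¹ * ω w (c*b) a : Circle) : ℂ) := by
  have A := hω c b a x
  have B := hω c b y a
  have C := hω c z b a
  rw [← e2, e1] at B
  rw [← e3] at C
  have D := hω w c b a
  have A' : ((ω c b a : ℂ)) * (ω c (b*a) x : ℂ) * (ω b a x : ℂ)
      = ((ω (c*b) a x : ℂ)) * (ω c b (a*x) : ℂ) := by exact_mod_cast congrArg (↑· : Circle → ℂ) A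
  have B' : ((ω c b y : ℂ)) * (ω c (z*b) a : ℂ) * (ω b y a : ℂ)
      = ((ω (c*b) y a : ℂ)) * (ω c b (a*x) : ℂ) := by exact_mod_cast congrArg (↑· : Circle → ℂ) B
  have C' : ((ω c z b : ℂ)) * (ω c (z*b) a : ℂ) * (ω z b a : ℂ)
      = ((ω (w*c) b a : ℂ)) * (ω c z (b*a) : ℂ) := by exact_mod_cast congrArg (↑· : Circle → ℂ) C
  have D' : ((ω w c b : ℂ)) * (ω w (c*b) a : ℂ) * (ω c b a : ℂ)
      = ((ω (w*c) b a : ℂ)) * (ω w c (b*a) : ℂ) := by exact_mod_cast congrArg (↑· : Circle → ℂ) D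
  have hP : ((ω b a x : ℂ)) * (ω z b a : ℂ) * (ω c (b*a) x : ℂ) * (ω w c (b*a) : ℂ)
        * (ω c z b : ℂ) * (ω (c*b) y a : ℂ)
      = ((ω c b y : ℂ)) * (ω w c b : ℂ) * (ω (c*b) a x : ℂ) * (ω w (c*b) a : ℂ)
        * (ω b y a : ℂ) * (ω c z (b*a) : ℂ) := by
    have I : (((ω b a x : ℂ)) * (ω z b a : ℂ) * (ω c (b*a) x : ℂ) * (ω w c (b*a) : ℂ)
        * (ω c z b : ℂ) * (ω (c*b) y a : ℂ)) *
        ((((ω (c*b) a x : ℂ)) * (ω c b (a*x) : ℂ)) *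
         (((ω (w*c) b a : ℂ)) * (ω c z (b*a) : ℂ)) *
         (((ω w c b : ℂ)) * (ω w (c*b) a : ℂ) * (ω c b a : ℂ)) *
         (((ω c b y : ℂ)) * (ω c (z*b) a : ℂ) * (ω b y a : ℂ)))
      = (((ω c b y : ℂ)) * (ω w c b : ℂ) * (ω (c*b) a x : ℂ) * (ω w (c*b) a : ℂ)
        * (ω b y a : ℂ) * (ω c z (b*a) : ℂ)) *
        ((((ω c b a : ℂ)) * (ω c (b*a) x : ℂ) * (ω b a x : ℂ)) *
         (((ω c z b : ℂ)) * (ω c (z*b) a : ℂ) * (ω z b a : ℂ)) *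
         (((ω (w*c) b a : ℂ)) * (ω w c (b*a) : ℂ)) *
         (((ω (c*b) y a : ℂ)) * (ω c b (a*x) : ℂ))) := by ring
    rw [A', C'] at I
    rw [← B', ← D'] at I
    have hK : ((((ω (c*b) a x : ℂ)) * (ω c b (a*x) : ℂ)) *
         (((ω (w*c) b a : ℂ)) * (ω c z (b*a) : ℂ)) *
         (((ω w c b : ℂ)) * (ω w (c*b) a : ℂ) * (ω c b a : ℂ)) *
         (((ω c b y : ℂ)) * (ω c (z*b) a : ℂ) * (ω b y a : ℂ))) ≠ 0 := by
      simp [mul_eq_zero]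
    exact mul_right_cancel₀ hK I
  have n1 := Circle.coe_ne_zero (ω b y a)
  have n2 := Circle.coe_ne_zero (ω c z (b*a))
  have n3 := Circle.coe_ne_zero (ω c z b)
  have n4 := Circle.coe_ne_zero (ω (c*b) y a)
  push_cast
  field_simp
  linear_combination hP

lemma BHBasis.ext' {x y : BHBasis G H} (e1 : x.h1 = y.h1) (e2 : x.g1 = y.g1)
    (e3 : x.s = y.s) (e4 : x.h2 = y.h2) (e5 : x.g2 = y.g2) : x = y := by
  cases x; cases y; simp_all

lemma bhMul_single_single (p q : BHBasis G H) (a b : ℂ) :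
    bhMul ω (Finsupp.single p a) (Finsupp.single q b) = (a * b) • bhMulBasis ω p q := by
  unfold bhMul
  rw [Finsupp.sum_single_index (by simp), Finsupp.sum_single_index (by simp)]

lemma bhMul_zero_left (y : BHBasis G H →₀ ℂ) : bhMul ω 0 y = 0 := by
  simp [bhMul]

lemma bhMul_zero_right (x : BHBasis G H →₀ ℂ) : bhMul ω x 0 = 0 := by
  simp [bhMul]

lemma bhMul_add_left (x1 x2 y : BHBasis G H →₀ ℂ) :
    bhMul ω (x1 + x2) y = bhMul ω x1 y + bhMul ω x2 y := by
  unfold bhMul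
  apply Finsupp.sum_add_index' (fun p => by simp)
  intro p a1 a2
  simp only [add_mul, add_smul, Finsupp.sum_add]

lemma bhMul_add_right (x y1 y2 : BHBasis G H →₀ ℂ) :
    bhMul ω x (y1 + y2) = bhMul ω x y1 + bhMul ω x y2 := by
  unfold bhMul
  rw [← Finsupp.sum_add]
  apply Finsupp.sum_congr
  intro p _
  apply Finsupp.sum_add_index' (fun q => by simp)
  intro q b1 b2
  simp only [mul_add, add_smul]

lemma bhMul_assoc_single
    (hω : ∀ g1 g2 g3 g4 : G,
      ω g1 g2 g3 * ω g1 (g2 * g3) g4 * ω g2 g3 g4 =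
        ω (g1 * g2) g3 g4 * ω g1 g2 (g3 * g4))
    (p q r : BHBasis G H) (a b c : ℂ) :
    bhMul ω (bhMul ω (Finsupp.single p a) (Finsupp.single q b)) (Finsupp.single r c) =
      bhMul ω (Finsupp.single p a) (bhMul ω (Finsupp.single q b) (Finsupp.single r c)) := by
  rw [bhMul_single_single, bhMul_single_single]
  by_cases h1 : q.h2 = p.h1 ∧ q.g2 = p.g1
  · by_cases h2 : r.h2 = q.h1 ∧ r.g2 = q.g1
    · unfold bhMulBasis
      rw [dif_pos h1, dif_pos h2]
      rw [Finsupp.smul_single', Finsupp.smul_single']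
      rw [bhMul_single_single, bhMul_single_single]
      unfold bhMulBasis
      rw [dif_pos (show _ ∧ _ from h2), dif_pos (show _ ∧ _ from h1)]
      rw [Finsupp.smul_single', Finsupp.smul_single']
      dsimp only
      rw [Finsupp.single_eq_single_iff]
      left
      constructor
      · exact BHBasis.ext' rfl rfl (mul_assoc r.s q.s p.s).symm rfl rfl
      · have e1 := p.rel; rw [← h1.1, ← h1.2] at e1
        have e2 := q.rel; rw [← h2.1, ← h2.2] at e2
        have e3 := r.rel
        have key := coeff_key' ω hω p.s q.s r.s (p.h2*p.g2) (q.h2*q.g2) (r.h2*r.g2)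
          (r.h1*r.g1) e1 e2 e3
        rw [← h2.1, ← h2.2]
        linear_combination (a*b*c) * key
    · unfold bhMulBasis
      rw [dif_pos h1, dif_neg h2]
      rw [Finsupp.smul_single', smul_zero, bhMul_zero_right, bhMul_single_single]
      unfold bhMulBasis
      rw [dif_neg (show ¬(_ ∧ _) from h2)]
      simp
  · by_cases h2 : r.h2 = q.h1 ∧ r.g2 = q.g1
    · unfold bhMulBasis
      rw [dif_neg h1, dif_pos h2]
      rw [Finsupp.smul_single', smul_zero, bhMul_zero_left, bhMul_single_single]
      unfold bhMulBasis
      rw [dif_neg (show ¬(_ ∧ _) from h1)]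
      simp
    · unfold bhMulBasis
      rw [dif_neg h1, dif_neg h2]
      simp [bhMul_zero_left, bhMul_zero_right]

end Aux

/-- Proposition 4.7 (combinatorial content): the multiplication of the affine annular
algebra of the Bisch–Haagerup subfactor is associative. -/
theorem stmt_16 {G : Type*} [Group G] [DecidableEq G] (H : Subgroup G)
    (ω : G → G → G → Circle)
    (hω : ∀ g1 g2 g3 g4 : G,
      ω g1 g2 g3 * ω g1 (g2 * g3) g4 * ω g2 g3 g4 =
        ω (g1 * g2) g3 g4 * ω g1 g2 (g3 * g4))
    (hnorm : ∀ g1 g2 g3 : G, (g1 = 1 ∨ g2 = 1 ∨ g3 = 1) → ω g1 g2 g3 = 1) :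
    ∀ x y z : BHBasis G H →₀ ℂ,
      bhMul ω (bhMul ω x y) z = bhMul ω x (bhMul ω y z) := by
  intro x y z
  induction x using Finsupp.induction_linear with
  | zero => simp [bhMul_zero_left]
  | add f g hf hg => rw [bhMul_add_left, bhMul_add_left, bhMul_add_left, hf, hg]
  | single p a =>
    induction y using Finsupp.induction_linear with
    | zero => simp [bhMul_zero_left, bhMul_zero_right]
    | add f g hf hg =>
        rw [bhMul_add_right, bhMul_add_left, bhMul_add_left, bhMul_add_right, hf, hg]
    | single q b =>
      induction z using Finsupp.induction_linear with
      | zero => simp [bhMul_zero_right]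
      | add f g hf hg => rw [bhMul_add_right, bhMul_add_right, bhMul_add_right, hf, hg]
      | single r c => exact bhMul_assoc_single ω hω p q r a b c
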